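/- The languages L₁ ⊆ A₁*, L₂ ⊆ A₂* are globally mutually normal (O⁻¹(O(P_i⁻¹(L_i))) ∩ P_j⁻¹(L_j) ⊆ P_i⁻¹(L_i) for all i ≠ j) if and only if they are mutually normal (O_i⁻¹(O_i(L_i)) ∩ P_i(P_j⁻¹(L_j)) ⊆ L_i for all i ≠ j). -/

import Mathlib

/-- Natural projection erasing events outside `B`. -/
noncomputable def proj {A : Type*} (B : Set A) (w : List A) : List A :=
  w.filter (fun a => @decide (a ∈ B) (Classical.propDecidable _))

/-- Concatenation of a language with a single event from `B`. -/
def cat {A : Type*} (L : Set (List A)) (B : Set A) : Set (List A) :=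
  {w | ∃ u ∈ L, ∃ a ∈ B, w = u ++ [a]}

/-- A language is prefix-closed. -/
def prefixClosed {A : Type*} (L : Set (List A)) : Prop :=
  ∀ w ∈ L, ∀ u : List A, u <+: w → u ∈ L

/-- `K` is controllable with respect to `L` and uncontrollable events `Au`. -/
def controllable {A : Type*} (K L : Set (List A)) (Au : Set A) : Prop :=
  cat K Au ∩ L ⊆ K

/-- `K` is normal with respect to `L` and observable events `Ao`. -/
def normalLang {A : Type*} (Ao : Set A) (K L : Set (List A)) : Prop :=
  proj Ao ⁻¹' (proj Ao '' K) ∩ L ⊆ K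

/-- Supremal controllable sublanguage of `K` w.r.t. `L` and `Au`. -/
def supC {A : Type*} (K L : Set (List A)) (Au : Set A) : Set (List A) :=
  ⋃₀ {K' | K' ⊆ K ∧ controllable K' L Au}

/-- Supremal normal sublanguage of `K` w.r.t. `L` and `Ao`. -/
def supN {A : Type*} (Ao : Set A) (K L : Set (List A)) : Set (List A) :=
  ⋃₀ {K' | K' ⊆ K ∧ normalLang Ao K' L}

/- ### Auxiliary lemmas -/

lemma proj_nil {A : Type*} (B : Set A) : proj B [] = [] := rfl

lemma proj_cons_mem {A : Type*} {B : Set A} {a : A} (w : List A) (h : a ∈ B) :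
    proj B (a :: w) = a :: proj B w := by
  simp [proj, List.filter_cons, h]

lemma proj_cons_not_mem {A : Type*} {B : Set A} {a : A} (w : List A) (h : a ∉ B) :
    proj B (a :: w) = proj B w := by
  simp [proj, List.filter_cons, h]

lemma proj_proj {A : Type*} (B C : Set A) (w : List A) :
    proj B (proj C w) = proj (B ∩ C) w := by
  induction w with
  | nil => rfl
  | cons a w ih =>
    by_cases hC : a ∈ C <;> by_cases hB : a ∈ B
    · rw [proj_cons_mem _ hC, proj_cons_mem _ hB, proj_cons_mem _ (Set.mem_inter hB hC), ih]
    · rw [proj_cons_mem _ hC, proj_cons_not_mem _ hB,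
        proj_cons_not_mem _ (fun h => hB h.1), ih]
    · rw [proj_cons_not_mem _ hC, proj_cons_not_mem _ (fun h => hC h.2), ih]
    · rw [proj_cons_not_mem _ hC, proj_cons_not_mem _ (fun h => hC h.2), ih]

lemma proj_congr {A : Type*} {B C : Set A} {w : List A}
    (h : ∀ a ∈ w, a ∈ B ↔ a ∈ C) : proj B w = proj C w := by
  induction w with
  | nil => rfl
  | cons a w ih =>
    have ha := h a (List.mem_cons_self (a := a) (l := w))
    have ih' := ih (fun b hb => h b (List.mem_cons_of_mem a hb))
    by_cases hB : a ∈ B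
    · rw [proj_cons_mem _ hB, proj_cons_mem _ (ha.mp hB), ih']
    · rw [proj_cons_not_mem _ hB, proj_cons_not_mem _ (fun hC => hB (ha.mpr hC)), ih']

lemma mem_of_mem_proj {A : Type*} {B : Set A} {w : List A} {a : A}
    (h : a ∈ proj B w) : a ∈ B := by
  have := List.of_mem_filter h
  simpa using this

/-- Two words over alphabets `B` and `C` that agree on the shared alphabet
have a common interleaving. -/
lemma merge {A : Type*} (B C : Set A) :
    ∀ (u z : List A), (∀ a ∈ u, a ∈ B) → (∀ a ∈ z, a ∈ C) →
      proj C u = proj B z → ∃ v, proj B v = u ∧ proj C v = z := by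
  intro u
  induction u with
  | nil =>
    intro z _ hz h
    refine ⟨z, ?_, ?_⟩
    · -- proj B z = proj C [] = []
      exact h.symm ▸ rfl
    · exact proj_congr (fun a ha => ⟨fun _ => hz a ha, fun _ => hz a ha⟩) ▸
        (List.filter_eq_self.mpr (fun a ha => by simpa using hz a ha))
  | cons b u ihu =>
    intro z
    induction z with
    | nil =>
      intro hu _ h
      refine ⟨b :: u, ?_, h⟩
      exact List.filter_eq_self.mpr (fun a ha => by simpa using hu a ha)
    | cons c z ihz =>
      intro hu hz h
      by_cases hbC : b ∈ C
      · by_cases hcB : c ∈ B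
        · -- both synchronized: heads equal
          rw [proj_cons_mem _ hbC, proj_cons_mem _ hcB] at h
          obtain ⟨rfl, h'⟩ : b = c ∧ proj C u = proj B z := by
            exact ⟨List.head_eq_of_cons_eq h, List.tail_eq_of_cons_eq h⟩
          obtain ⟨v, hv1, hv2⟩ := ihu z (fun a ha => hu a (List.mem_cons_of_mem _ ha))
            (fun a ha => hz a (List.mem_cons_of_mem _ ha)) h'
          exact ⟨b :: v, by rw [proj_cons_mem _ (hu b (List.mem_cons_self (a := b) (l := u))), hv1],
            by rw [proj_cons_mem _ hbC, hv2]⟩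
        · -- c ∉ B : consume c
          rw [proj_cons_not_mem (B := B) _ hcB] at h
          obtain ⟨v, hv1, hv2⟩ := ihz hu (fun a ha => hz a (List.mem_cons_of_mem _ ha)) h
          refine ⟨c :: v, by rw [proj_cons_not_mem _ hcB, hv1],
            by rw [proj_cons_mem _ (hz c (List.mem_cons_self (a := c) (l := z))), hv2]⟩
      · -- b ∉ C : consume b
        rw [proj_cons_not_mem (B := C) _ hbC] at h
        obtain ⟨v, hv1, hv2⟩ := ihu (c :: z) (fun a ha => hu a (List.mem_cons_of_mem _ ha)) hz h
        exact ⟨b :: v, by rw [proj_cons_mem _ (hu b (List.mem_cons_self (a := b) (l := u))), hv1],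
          by rw [proj_cons_not_mem _ hbC, hv2]⟩

lemma proj_eq_self {A : Type*} {B : Set A} {w : List A} (h : ∀ a ∈ w, a ∈ B) :
    proj B w = w :=
  List.filter_eq_self.mpr (fun a ha => by simpa using h a ha)

/-- One direction, one component: global mutual normality implies mutual normality. -/
lemma glob_to_loc {A : Type*} (A1 A2 Ao : Set A) (L1 L2 : Set (List A))
    (hW1 : ∀ w ∈ L1, ∀ a ∈ w, a ∈ A1)
    (h : proj Ao ⁻¹' (proj Ao '' (proj A1 ⁻¹' L1)) ∩ proj A2 ⁻¹' L2 ⊆ proj A1 ⁻¹' L1) :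
    proj (A1 ∩ Ao) ⁻¹' (proj (A1 ∩ Ao) '' L1) ∩ (proj A1 '' (proj A2 ⁻¹' L2)) ⊆ L1 := by
  rintro x ⟨⟨u, huL, hu⟩, y, hy2, rfl⟩
  -- hu : proj (A1 ∩ Ao) u = proj (A1 ∩ Ao) (proj A1 y)
  -- Merge u with proj Ao y.
  have hou : proj Ao u = proj A1 (proj Ao y) := by
    have h1 : proj Ao u = proj (A1 ∩ Ao) u :=
      proj_congr (fun a ha => by
        have := hW1 u huL a ha
        simp [Set.mem_inter_iff, this])
    have h2 : proj (A1 ∩ Ao) (proj A1 y) = proj ((A1 ∩ Ao) ∩ A1) y := proj_proj _ _ _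
    have h3 : proj A1 (proj Ao y) = proj (A1 ∩ Ao) y := proj_proj _ _ _
    have h4 : proj ((A1 ∩ Ao) ∩ A1) y = proj (A1 ∩ Ao) y :=
      proj_congr (fun a _ => by simp only [Set.mem_inter_iff]; tauto)
    rw [h1, hu, h2, h4, h3]
  obtain ⟨v, hv1, hv2⟩ := merge A1 Ao u (proj Ao y) (hW1 u huL)
    (fun a ha => mem_of_mem_proj ha) hou
  have hy : y ∈ proj A1 ⁻¹' L1 := by
    apply h
    exact ⟨⟨v, by rw [Set.mem_preimage, hv1]; exact huL, hv2⟩, hy2⟩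
  exact hy

/-- The converse, one component: mutual normality implies global mutual normality. -/
lemma loc_to_glob {A : Type*} (A1 A2 Ao : Set A) (L1 L2 : Set (List A))
    (g : proj (A1 ∩ Ao) ⁻¹' (proj (A1 ∩ Ao) '' L1) ∩ (proj A1 '' (proj A2 ⁻¹' L2)) ⊆ L1) :
    proj Ao ⁻¹' (proj Ao '' (proj A1 ⁻¹' L1)) ∩ proj A2 ⁻¹' L2 ⊆ proj A1 ⁻¹' L1 := by
  rintro w ⟨⟨v, hv1, hv2⟩, hw2⟩
  -- hv1 : proj A1 v ∈ L1, hv2 : proj Ao v = proj Ao w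
  apply g
  constructor
  · refine ⟨proj A1 v, hv1, ?_⟩
    have e1 : ∀ z : List A, proj (A1 ∩ Ao) (proj A1 z) = proj (A1 ∩ Ao) z := by
      intro z
      rw [proj_proj]
      exact proj_congr (fun a _ => by simp only [Set.mem_inter_iff]; tauto)
    have e2 : ∀ z : List A, proj (A1 ∩ Ao) (proj Ao z) = proj (A1 ∩ Ao) z := by
      intro z
      rw [proj_proj]
      exact proj_congr (fun a _ => by simp only [Set.mem_inter_iff]; tauto)
    calc proj (A1 ∩ Ao) (proj A1 v) = proj (A1 ∩ Ao) v := e1 v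
      _ = proj (A1 ∩ Ao) (proj Ao v) := (e2 v).symm
      _ = proj (A1 ∩ Ao) (proj Ao w) := by rw [hv2]
      _ = proj (A1 ∩ Ao) w := e2 w
      _ = proj (A1 ∩ Ao) (proj A1 w) := (e1 w).symm
  · exact ⟨w, hw2, rfl⟩

/-- Global mutual normality is equivalent to mutual normality. -/
theorem stmt14 {A : Type*} (A1 A2 Ao : Set A) (L1 L2 : Set (List A))
    (hW1 : ∀ w ∈ L1, ∀ a ∈ w, a ∈ A1) (hW2 : ∀ w ∈ L2, ∀ a ∈ w, a ∈ A2) :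
    (proj Ao ⁻¹' (proj Ao '' (proj A1 ⁻¹' L1)) ∩ proj A2 ⁻¹' L2 ⊆ proj A1 ⁻¹' L1 ∧
     proj Ao ⁻¹' (proj Ao '' (proj A2 ⁻¹' L2)) ∩ proj A1 ⁻¹' L1 ⊆ proj A2 ⁻¹' L2)
    ↔
    (proj (A1 ∩ Ao) ⁻¹' (proj (A1 ∩ Ao) '' L1) ∩ (proj A1 '' (proj A2 ⁻¹' L2)) ⊆ L1 ∧
     proj (A2 ∩ Ao) ⁻¹' (proj (A2 ∩ Ao) '' L2) ∩ (proj A2 '' (proj A1 ⁻¹' L1)) ⊆ L2) := by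
  constructor
  · rintro ⟨h1, h2⟩
    exact ⟨glob_to_loc A1 A2 Ao L1 L2 hW1 h1, glob_to_loc A2 A1 Ao L2 L1 hW2 h2⟩
  · rintro ⟨g1, g2⟩
    exact ⟨loc_to_glob A1 A2 Ao L1 L2 g1, loc_to_glob A2 A1 Ao L2 L1 g2⟩
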